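/- Let K ∈ ℝ_{>0}^{R1×R2} be entrywise positive, let μ ∈ ℝ_{>0}^{R1} and ν ∈ ℝ_{>0}^{R2} be entrywise positive, and let (u*, v*) be positive vectors satisfying u* = μ ./ (K v*) and v* = ν ./ (Kᵀ u*). For any entrywise positive v, define u⁺ = μ ./ (K v). Then d_HP(u⁺, u*) ≤ κ(K) · d_HP(v, v*), where d_HP is the Hilbert projective metric and κ(K) the Birkhoff contraction constant of K. -/

import Mathlib

noncomputable section

/-- The Hilbert projective metric `d_HP(x,y) = log max_{i,j} (x_i y_j)/(x_j y_i)`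
on entrywise positive vectors. -/
def dHP {R : ℕ} (x y : Fin R → ℝ) : ℝ :=
  Real.log (⨆ i, ⨆ j, x i * y j / (x j * y i))

/-- `ψ(K) = max_{i,j,k,l} (K_{ik} K_{jl})/(K_{jk} K_{il})` for a positive matrix `K`. -/
def psiK {R1 R2 : ℕ} (K : Matrix (Fin R1) (Fin R2) ℝ) : ℝ :=
  ⨆ i, ⨆ j, ⨆ k, ⨆ l, K i k * K j l / (K j k * K i l)

/-- The Birkhoff contraction constant `κ(K) = (√ψ(K) - 1)/(√ψ(K) + 1)`. -/
def kappaK {R1 R2 : ℕ} (K : Matrix (Fin R1) (Fin R2) ℝ) : ℝ :=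
  (Real.sqrt (psiK K) - 1) / (Real.sqrt (psiK K) + 1)

lemma c0_lemma (a α β : ℝ) (ha : 1 ≤ a) (hα0 : 0 ≤ α) (hα1 : α ≤ 1)
    (hβ0 : 0 ≤ β) (hβ1 : β ≤ 1) (hC : α*(1-β) ≤ a^2*(β*(1-α))) :
    (a+1)*(α-β) ≤ a-1 := by
  set p := Real.sqrt (α*(1-β)) with hp
  set q := Real.sqrt (β*(1-α)) with hq
  have hα1' : 0 ≤ 1 - α := by linarith
  have hβ1' : 0 ≤ 1 - β := by linarith
  have hp0 : 0 ≤ p := Real.sqrt_nonneg _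
  have hq0 : 0 ≤ q := Real.sqrt_nonneg _
  have hp2 : p^2 = α*(1-β) := Real.sq_sqrt (mul_nonneg hα0 hβ1')
  have hq2 : q^2 = β*(1-α) := Real.sq_sqrt (mul_nonneg hβ0 hα1')
  have hpaq : p ≤ a*q := by
    have h1 : Real.sqrt (α*(1-β)) ≤ Real.sqrt (a^2*(β*(1-α))) := Real.sqrt_le_sqrt hC
    have h2 : Real.sqrt (a^2*(β*(1-α))) = a * q := by
      rw [Real.sqrt_mul (sq_nonneg a), Real.sqrt_sq (by linarith)]
    rw [hp, hq] at *; linarith [h1, h2.symm.le, h2.le]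
  have hpqle : p*q ≤ (α*β + (1-α)*(1-β))/2 := by
    have h1 : p*q = Real.sqrt ((α*β)*((1-α)*(1-β))) := by
      rw [hp, hq, ← Real.sqrt_mul (mul_nonneg hα0 hβ1')]; ring_nf
    rw [h1]
    have h2 : (α*β)*((1-α)*(1-β)) ≤ ((α*β + (1-α)*(1-β))/2)^2 := by nlinarith [sq_nonneg (α*β - (1-α)*(1-β))]
    calc Real.sqrt ((α*β)*((1-α)*(1-β))) ≤ Real.sqrt (((α*β + (1-α)*(1-β))/2)^2) := Real.sqrt_le_sqrt h2
      _ = |(α*β + (1-α)*(1-β))/2| := Real.sqrt_sq_eq_abs _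
      _ = (α*β + (1-α)*(1-β))/2 := abs_of_nonneg (by positivity)
  have hsum : p + q ≤ 1 := by
    nlinarith [sq_nonneg (p+q), hp2, hq2, hpqle]
  have hab : α - β = p^2 - q^2 := by rw [hp2, hq2]; ring
  nlinarith [mul_nonneg (add_nonneg hp0 hq0) (by linarith : (0:ℝ) ≤ a*q - p),
    mul_nonneg (by linarith : (0:ℝ) ≤ a - 1) (by nlinarith [sq_nonneg (p+q)] : 0 ≤ 1 - (p+q)^2)]

lemma key_poly (a r α β : ℝ) (ha : 1 ≤ a) (hr : 1 ≤ r) (hα0 : 0 ≤ α) (hα1 : α ≤ 1)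
    (hβ0 : 0 ≤ β) (hβ1 : β ≤ 1) (hC : α*(1-β) ≤ a^2*(β*(1-α))) :
    (a+1)*r*(α-β) ≤ (a-1)*((1+(r-1)*α)*(1+(r-1)*β)) := by
  have hc0 := c0_lemma a α β ha hα0 hα1 hβ0 hβ1 hC
  have hR : 0 ≤ r - 1 := by linarith
  rcases le_or_gt α (a*β) with hcase | hcase
  · nlinarith [mul_nonneg hR (by linarith : 0 ≤ a*β - α), mul_nonneg (mul_nonneg (sq_nonneg (r-1)) (by linarith : (0:ℝ) ≤ a-1)) (mul_nonneg hα0 hβ0)]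
  · -- α > a β branch
    have ha1 : 1 < a := by
      by_contra h
      push_neg at h
      have : a = 1 := le_antisymm h ha
      rw [this] at hC hcase; nlinarith
    have hβpos : 0 < β := by
      rcases eq_or_lt_of_le hβ0 with h | h
      · exfalso; rw [← h] at hC hcase; nlinarith
      · exact h
    have hαpos : 0 < α := lt_of_le_of_lt (by positivity) hcase
    have hD' : 0 ≤ (a-1)*α*β*((a-1)-(a+1)*(α-β)) - (α-a*β)^2 := by
      have hkey : 2*a*(α+a*β) * ((a-1)*α*β*((a-1)-(a+1)*(α-β)) - (α-a*β)^2)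
          = (a^2*(β*(1-α)) - α*(1-β)) * (4*a*(a-1)*(α*β) + (a-1)*(α-a*β)^2 + (a+1)*((α+a*β)*(α-a*β))) := by
        ring
      have hpos : 0 < 2*a*(α+a*β) := by positivity
      have hrhs : 0 ≤ (a^2*(β*(1-α)) - α*(1-β)) * (4*a*(a-1)*(α*β) + (a-1)*(α-a*β)^2 + (a+1)*((α+a*β)*(α-a*β))) := by
        apply mul_nonneg (by linarith)
        have h1 : 0 ≤ α - a*β := by linarith
        have h2 : 0 ≤ α + a*β := by positivity
        have h3 : 0 ≤ (a:ℝ)-1 := by linarith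
        nlinarith [mul_nonneg h2 h1, sq_nonneg (α-a*β), mul_nonneg h3 (sq_nonneg (α-a*β)), mul_nonneg (mul_nonneg (by positivity : (0:ℝ) ≤ 4*a) h3) (mul_nonneg hα0 hβ0)]
      nlinarith [hkey, hrhs, hpos]
    have habpos : 0 < (a-1)*α*β := by
      apply mul_pos (mul_pos (by linarith) hαpos) hβpos
    nlinarith [sq_nonneg ((a-1)*α*β*(r-1) - (α-a*β)), hD', habpos, mul_pos habpos habpos]

lemma hasDerivAt_f (α β κ : ℝ) (hα0 : 0 ≤ α) (hα1 : α ≤ 1) (hβ0 : 0 ≤ β) (hβ1 : β ≤ 1)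
    (s : ℝ) (hs : 1 ≤ s) :
    HasDerivAt (fun x => κ * Real.log x + Real.log (1+(x-1)*β) - Real.log (1+(x-1)*α))
      (κ / s + β/(1+(s-1)*β) - α/(1+(s-1)*α)) s := by
  have hA : (0:ℝ) < 1+(s-1)*α := by nlinarith
  have hB : (0:ℝ) < 1+(s-1)*β := by nlinarith
  have hs0 : s ≠ 0 := by linarith
  have h1 : HasDerivAt (fun x : ℝ => κ * Real.log x) (κ / s) s := by
    simpa [div_eq_mul_inv, mul_comm] using (Real.hasDerivAt_log hs0).const_mul κ
  have haffβ : HasDerivAt (fun x : ℝ => 1+(x-1)*β) β s := by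
    simpa using (((hasDerivAt_id s).sub_const 1).mul_const β).const_add 1
  have haffα : HasDerivAt (fun x : ℝ => 1+(x-1)*α) α s := by
    simpa using (((hasDerivAt_id s).sub_const 1).mul_const α).const_add 1
  have h2 : HasDerivAt (fun x : ℝ => Real.log (1+(x-1)*β)) (β/(1+(s-1)*β)) s := by
    have := (Real.hasDerivAt_log hB.ne').comp s haffβ; rw [div_eq_inv_mul]; exact this
  have h3 : HasDerivAt (fun x : ℝ => Real.log (1+(x-1)*α)) (α/(1+(s-1)*α)) s := by
    have := (Real.hasDerivAt_log hA.ne').comp s haffα; rw [div_eq_inv_mul]; exact this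
  exact (h1.add h2).sub h3

lemma log_ratio_le (a r α β : ℝ) (ha : 1 ≤ a) (hr : 1 ≤ r) (hα0 : 0 ≤ α) (hα1 : α ≤ 1)
    (hβ0 : 0 ≤ β) (hβ1 : β ≤ 1) (hC : α*(1-β) ≤ a^2*(β*(1-α))) :
    Real.log (1+(r-1)*α) - Real.log (1+(r-1)*β) ≤ (a-1)/(a+1) * Real.log r := by
  set κ := (a-1)/(a+1) with hκ
  set f : ℝ → ℝ := fun x => κ * Real.log x + Real.log (1+(x-1)*β) - Real.log (1+(x-1)*α) with hf
  have hmono : MonotoneOn f (Set.Ici 1) := by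
    apply monotoneOn_of_deriv_nonneg (convex_Ici 1)
    · intro x hx
      exact ((hasDerivAt_f α β κ hα0 hα1 hβ0 hβ1 x hx).continuousAt).continuousWithinAt
    · intro x hx
      rw [interior_Ici] at hx
      exact (hasDerivAt_f α β κ hα0 hα1 hβ0 hβ1 x hx.le).differentiableAt.differentiableWithinAt
    · intro x hx
      rw [interior_Ici] at hx
      have hx1 : (1:ℝ) ≤ x := hx.le
      rw [(hasDerivAt_f α β κ hα0 hα1 hβ0 hβ1 x hx1).deriv]
      have hA : (0:ℝ) < 1+(x-1)*α := by nlinarith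
      have hB : (0:ℝ) < 1+(x-1)*β := by nlinarith
      have hx0 : (0:ℝ) < x := by linarith
      have hkey := key_poly a x α β ha hx1 hα0 hα1 hβ0 hβ1 hC
      have hval : κ / x + β/(1+(x-1)*β) - α/(1+(x-1)*α)
          = ((a-1)*((1+(x-1)*α)*(1+(x-1)*β)) - (a+1)*x*(α-β)) / ((a+1)*x*((1+(x-1)*α)*(1+(x-1)*β))) := by
        have hapos : (0:ℝ) < a + 1 := by linarith
        rw [hκ, div_div, div_add_div _ _ (mul_pos hapos hx0).ne' hB.ne', div_sub_div _ _ (mul_pos (mul_pos hapos hx0) hB).ne' hA.ne', div_eq_div_iff (mul_pos (mul_pos (mul_pos hapos hx0) hB) hA).ne' (mul_pos (mul_pos hapos hx0) (mul_pos hA hB)).ne']; ring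
      rw [hval]
      apply div_nonneg (by linarith) (by positivity)
  have h1 : f 1 ≤ f r := hmono Set.self_mem_Ici (Set.mem_Ici.2 hr) hr
  have hf1 : f 1 = 0 := by simp [hf]
  rw [hf1] at h1
  simp only [hf] at h1
  linarith

lemma sum_ratio_le {n : ℕ} [Nonempty (Fin n)] (ψ a : ℝ) (ha : 1 ≤ a) (ha2 : a^2 = ψ)
    (aa bb t : Fin n → ℝ) (haa : ∀ k, 0 < aa k) (hbb : ∀ k, 0 < bb k)
    (hcross : ∀ k l, aa k * bb l ≤ ψ * (aa l * bb k))
    (m M : ℝ) (hm : 0 < m) (hmt : ∀ k, m ≤ t k) (htM : ∀ k, t k ≤ M) :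
    Real.log ((∑ k, aa k * t k) * (∑ k, bb k) / ((∑ k, aa k) * (∑ k, bb k * t k)))
      ≤ (a-1)/(a+1) * Real.log (M/m) := by
  have hSa : 0 < ∑ k, aa k := Finset.sum_pos (fun k _ => haa k) Finset.univ_nonempty
  have hSb : 0 < ∑ k, bb k := Finset.sum_pos (fun k _ => hbb k) Finset.univ_nonempty
  have ht : ∀ k, 0 < t k := fun k => lt_of_lt_of_le hm (hmt k)
  have hSat : 0 < ∑ k, aa k * t k := Finset.sum_pos (fun k _ => mul_pos (haa k) (ht k)) Finset.univ_nonempty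
  have hSbt : 0 < ∑ k, bb k * t k := Finset.sum_pos (fun k _ => mul_pos (hbb k) (ht k)) Finset.univ_nonempty
  have hmM : m ≤ M := le_trans (hmt (Classical.arbitrary _)) (htM (Classical.arbitrary _))
  rcases eq_or_lt_of_le hmM with heq | hlt
  · -- m = M : t is constant
    have htc : ∀ k, t k = m := fun k => le_antisymm (heq ▸ htM k) (hmt k)
    have h1 : (∑ k, aa k * t k) = m * ∑ k, aa k := by
      rw [Finset.mul_sum]; exact Finset.sum_congr rfl (fun k _ => by rw [htc k]; ring)
    have h2 : (∑ k, bb k * t k) = m * ∑ k, bb k := by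
      rw [Finset.mul_sum]; exact Finset.sum_congr rfl (fun k _ => by rw [htc k]; ring)
    rw [h1, h2, ← heq, div_self hm.ne', Real.log_one, mul_zero]
    have : m * (∑ k, aa k) * (∑ k, bb k) / ((∑ k, aa k) * (m * ∑ k, bb k)) = 1 := by
      field_simp
    rw [this, Real.log_one]
  · -- m < M
    have hMm : 0 < M - m := by linarith
    set s : Fin n → ℝ := fun k => (t k - m)/(M - m) with hs
    have hs0 : ∀ k, 0 ≤ s k := fun k => div_nonneg (by linarith [hmt k]) hMm.le
    have hs1 : ∀ k, s k ≤ 1 := fun k => (div_le_one hMm).2 (by linarith [htM k])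
    set α := (∑ k, aa k * s k)/(∑ k, aa k) with hα
    set β := (∑ k, bb k * s k)/(∑ k, bb k) with hβ
    have hα0 : 0 ≤ α := div_nonneg (Finset.sum_nonneg fun k _ => mul_nonneg (haa k).le (hs0 k)) hSa.le
    have hβ0 : 0 ≤ β := div_nonneg (Finset.sum_nonneg fun k _ => mul_nonneg (hbb k).le (hs0 k)) hSb.le
    have hα1 : α ≤ 1 := (div_le_one hSa).2 (Finset.sum_le_sum fun k _ => by
      nlinarith [haa k, hs1 k])
    have hβ1 : β ≤ 1 := (div_le_one hSb).2 (Finset.sum_le_sum fun k _ => by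
      nlinarith [hbb k, hs1 k])
    -- the cross constraint
    have hnum : (∑ k, aa k * s k) * (∑ k, bb k * (1 - s k))
        ≤ ψ * ((∑ k, bb k * s k) * (∑ k, aa k * (1 - s k))) := by
      rw [Finset.sum_mul_sum, Finset.sum_mul_sum, Finset.mul_sum]
      apply Finset.sum_le_sum
      intro k _
      rw [Finset.mul_sum]
      apply Finset.sum_le_sum
      intro l _
      calc aa k * s k * (bb l * (1 - s l)) = (aa k * bb l) * (s k * (1 - s l)) := by ring
        _ ≤ (ψ * (aa l * bb k)) * (s k * (1 - s l)) := by
            apply mul_le_mul_of_nonneg_right (hcross k l)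
            exact mul_nonneg (hs0 k) (by linarith [hs1 l])
        _ = ψ * (bb k * s k * (aa l * (1 - s l))) := by ring
    have hC : α*(1-β) ≤ a^2*(β*(1-α)) := by
      rw [ha2]
      have e1 : α*(1-β) = ((∑ k, aa k * s k) * (∑ k, bb k * (1 - s k))) / ((∑ k, aa k) * (∑ k, bb k)) := by
        rw [hα, hβ]
        have : (∑ k, bb k * (1 - s k)) = (∑ k, bb k) - (∑ k, bb k * s k) := by
          rw [← Finset.sum_sub_distrib]; exact Finset.sum_congr rfl (fun k _ => by ring)
        rw [this]; field_simp
      have e2 : β*(1-α) = ((∑ k, bb k * s k) * (∑ k, aa k * (1 - s k))) / ((∑ k, aa k) * (∑ k, bb k)) := by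
        have h3 : (∑ k, aa k * (1 - s k)) = (∑ k, aa k) - (∑ k, aa k * s k) := by
          rw [← Finset.sum_sub_distrib]; exact Finset.sum_congr rfl (fun k _ => by ring)
        rw [h3, hβ, hα, one_sub_div hSa.ne', div_mul_div_comm, mul_comm (∑ k, bb k) (∑ k, aa k)]
      rw [e1, e2, ← mul_div_assoc]
      gcongr
    -- rewrite the ratio in terms of α, β, r
    set r := M/m with hrdef
    have hr : 1 ≤ r := (one_le_div hm).2 hmM
    have htk : ∀ k, t k = m + (M-m) * s k := by
      intro k; rw [hs]; field_simp; ring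
    have hA : (0:ℝ) < 1+(r-1)*α := by nlinarith
    have hB : (0:ℝ) < 1+(r-1)*β := by nlinarith
    have hat : (∑ k, aa k * t k) = m * ((∑ k, aa k) * (1+(r-1)*α)) := by
      have : (∑ k, aa k * t k) = m * (∑ k, aa k) + (M-m) * (∑ k, aa k * s k) := by
        rw [Finset.mul_sum, Finset.mul_sum, ← Finset.sum_add_distrib]
        exact Finset.sum_congr rfl (fun k _ => by rw [htk k]; ring)
      rw [this, hα, hrdef]; field_simp
    have hbt : (∑ k, bb k * t k) = m * ((∑ k, bb k) * (1+(r-1)*β)) := by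
      have : (∑ k, bb k * t k) = m * (∑ k, bb k) + (M-m) * (∑ k, bb k * s k) := by
        rw [Finset.mul_sum, Finset.mul_sum, ← Finset.sum_add_distrib]
        exact Finset.sum_congr rfl (fun k _ => by rw [htk k]; ring)
      rw [this, hβ, hrdef]; field_simp
    have hterm : (∑ k, aa k * t k) * (∑ k, bb k) / ((∑ k, aa k) * (∑ k, bb k * t k))
        = (1+(r-1)*α) / (1+(r-1)*β) := by
      rw [hat, hbt]; field_simp
    rw [hterm, Real.log_div hA.ne' hB.ne']
    exact log_ratio_le a r α β ha hr hα0 hα1 hβ0 hβ1 hC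

/-- One Sinkhorn half-step contracts the Hilbert projective metric: if `(u*, v*)` is
a Sinkhorn fixed point and `u⁺ = μ ./ (K v)`, then
`d_HP(u⁺, u*) ≤ κ(K) d_HP(v, v*)`. -/
theorem sinkhorn_half_step_contraction {R1 R2 : ℕ}
    [Nonempty (Fin R1)] [Nonempty (Fin R2)]
    (K : Matrix (Fin R1) (Fin R2) ℝ) (hK : ∀ i j, 0 < K i j)
    (μ : Fin R1 → ℝ) (ν : Fin R2 → ℝ)
    (hμpos : ∀ m, 0 < μ m) (hνpos : ∀ n, 0 < ν n)
    (ustar : Fin R1 → ℝ) (vstar : Fin R2 → ℝ)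
    (hustar_pos : ∀ m, 0 < ustar m) (hvstar_pos : ∀ n, 0 < vstar n)
    (hustar : ∀ m, ustar m = μ m / K.mulVec vstar m)
    (hvstar : ∀ n, vstar n = ν n / K.transpose.mulVec ustar n)
    (v : Fin R2 → ℝ) (hv : ∀ n, 0 < v n) :
    dHP (fun m => μ m / K.mulVec v m) ustar ≤ kappaK K * dHP v vstar := by
  have hbdd : ∀ {m : ℕ} (f : Fin m → ℝ), BddAbove (Set.range f) :=
    fun f => (Set.finite_range f).bddAbove
  -- basic facts about ψ and a = √ψ
  have hle_psi : ∀ i j k l, K i k * K j l / (K j k * K i l) ≤ psiK K := by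
    intro i j k l
    calc K i k * K j l / (K j k * K i l)
        ≤ ⨆ l', K i k * K j l' / (K j k * K i l') :=
          le_ciSup (f := fun l' => K i k * K j l' / (K j k * K i l')) (hbdd _) l
      _ ≤ ⨆ k', ⨆ l', K i k' * K j l' / (K j k' * K i l') :=
          le_ciSup (f := fun k' => ⨆ l', K i k' * K j l' / (K j k' * K i l')) (hbdd _) k
      _ ≤ ⨆ j', ⨆ k', ⨆ l', K i k' * K j' l' / (K j' k' * K i l') :=
          le_ciSup (f := fun j' => ⨆ k', ⨆ l', K i k' * K j' l' / (K j' k' * K i l')) (hbdd _) j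
      _ ≤ psiK K :=
          le_ciSup (f := fun i' => ⨆ j', ⨆ k', ⨆ l', K i' k' * K j' l' / (K j' k' * K i' l')) (hbdd _) i
  have hψ1 : 1 ≤ psiK K := by
    have i0 := Classical.arbitrary (Fin R1)
    have k0 := Classical.arbitrary (Fin R2)
    have h := hle_psi i0 i0 k0 k0
    rwa [div_self (mul_pos (hK i0 k0) (hK i0 k0)).ne'] at h
  have hψ0 : (0:ℝ) ≤ psiK K := le_trans zero_le_one hψ1
  set a := Real.sqrt (psiK K) with hadef
  have ha1 : 1 ≤ a := by
    rw [hadef, show (1:ℝ) = Real.sqrt 1 from Real.sqrt_one.symm]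
    exact Real.sqrt_le_sqrt hψ1
  have ha2 : a^2 = psiK K := Real.sq_sqrt hψ0
  have hκeq : kappaK K = (a-1)/(a+1) := rfl
  have hκ0 : 0 ≤ kappaK K := by rw [hκeq]; apply div_nonneg <;> linarith
  -- positivity of K ⬝ w
  have hmveq : ∀ (w : Fin R2 → ℝ) i, K.mulVec w i = ∑ k, K i k * w k := by
    intro w i; simp [Matrix.mulVec, dotProduct]
  have hmv : ∀ (w : Fin R2 → ℝ), (∀ k, 0 < w k) → ∀ i, 0 < K.mulVec w i := by
    intro w hw i
    rw [hmveq]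
    exact Finset.sum_pos (fun k _ => mul_pos (hK i k) (hw k)) Finset.univ_nonempty
  -- the ratio vector and its extremes
  set t : Fin R2 → ℝ := fun k => vstar k / v k with htdef
  have ht : ∀ k, 0 < t k := fun k => div_pos (hvstar_pos k) (hv k)
  obtain ⟨k0, hk0⟩ := Finite.exists_min t
  obtain ⟨k1, hk1⟩ := Finite.exists_max t
  set r := t k1 / t k0 with hrdef
  have hrpos : 0 < r := div_pos (ht k1) (ht k0)
  have hlogr : Real.log r ≤ dHP v vstar := by
    have he : v k0 * vstar k1 / (v k1 * vstar k0) = r := by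
      rw [hrdef, htdef]
      field_simp
    have hsup : r ≤ ⨆ n, ⨆ n', v n * vstar n' / (v n' * vstar n) :=
      calc r = v k0 * vstar k1 / (v k1 * vstar k0) := he.symm
        _ ≤ ⨆ n', v k0 * vstar n' / (v n' * vstar k0) :=
            le_ciSup (f := fun n' => v k0 * vstar n' / (v n' * vstar k0)) (hbdd _) k1
        _ ≤ ⨆ n, ⨆ n', v n * vstar n' / (v n' * vstar n) :=
            le_ciSup (f := fun n => ⨆ n', v n * vstar n' / (v n' * vstar n)) (hbdd _) k0
    exact Real.log_le_log hrpos hsup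
  -- per-pair bound
  have hterm : ∀ i j, (μ i / K.mulVec v i) * ustar j / ((μ j / K.mulVec v j) * ustar i)
      ≤ Real.exp (kappaK K * dHP v vstar) := by
    intro i j
    set aa : Fin R2 → ℝ := fun k => K i k * v k with haadef
    set bb : Fin R2 → ℝ := fun k => K j k * v k with hbbdef
    have haa : ∀ k, 0 < aa k := fun k => mul_pos (hK i k) (hv k)
    have hbb : ∀ k, 0 < bb k := fun k => mul_pos (hK j k) (hv k)
    have hcross : ∀ k l, aa k * bb l ≤ psiK K * (aa l * bb k) := by
      intro k l
      have hkl : K i k * K j l ≤ psiK K * (K j k * K i l) :=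
        (div_le_iff₀ (mul_pos (hK j k) (hK i l))).1 (hle_psi i j k l)
      have hvv : 0 < v k * v l := mul_pos (hv k) (hv l)
      calc aa k * bb l = (K i k * K j l) * (v k * v l) := by rw [haadef, hbbdef]; ring
        _ ≤ (psiK K * (K j k * K i l)) * (v k * v l) := mul_le_mul_of_nonneg_right hkl hvv.le
        _ = psiK K * (aa l * bb k) := by rw [haadef, hbbdef]; ring
    have hSa : (∑ k, aa k) = K.mulVec v i := by simp only [hmveq, haadef]
    have hSb : (∑ k, bb k) = K.mulVec v j := by simp only [hmveq, hbbdef]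
    have hSat : (∑ k, aa k * t k) = K.mulVec vstar i := by
      simp only [hmveq, haadef, htdef]
      apply Finset.sum_congr rfl
      intro k _
      field_simp [(hv k).ne']
    have hSbt : (∑ k, bb k * t k) = K.mulVec vstar j := by
      simp only [hmveq, hbbdef, htdef]
      apply Finset.sum_congr rfl
      intro k _
      field_simp [(hv k).ne']
    have hlog := sum_ratio_le (psiK K) a ha1 ha2 aa bb t haa hbb hcross (t k0) (t k1)
      (ht k0) hk0 hk1
    rw [← hrdef] at hlog
    have hpos : (0:ℝ) < (∑ k, aa k * t k) * (∑ k, bb k) / ((∑ k, aa k) * (∑ k, bb k * t k)) := by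
      rw [hSa, hSb, hSat, hSbt]
      have h1 := hmv v hv i; have h2 := hmv v hv j
      have h3 := hmv vstar hvstar_pos i; have h4 := hmv vstar hvstar_pos j
      positivity
    have h2 : Real.log ((∑ k, aa k * t k) * (∑ k, bb k) / ((∑ k, aa k) * (∑ k, bb k * t k)))
        ≤ kappaK K * dHP v vstar := by
      refine le_trans hlog ?_
      rw [hκeq]
      exact mul_le_mul_of_nonneg_left hlogr (by rw [← hκeq]; exact hκ0)
    have h3 := (Real.log_le_iff_le_exp hpos).1 h2
    have hval : (μ i / K.mulVec v i) * ustar j / ((μ j / K.mulVec v j) * ustar i)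
        = (∑ k, aa k * t k) * (∑ k, bb k) / ((∑ k, aa k) * (∑ k, bb k * t k)) := by
      rw [hustar i, hustar j, hSa, hSb, hSat, hSbt]
      have h1 := hmv v hv i; have h2 := hmv v hv j
      have h3 := hmv vstar hvstar_pos i; have h4 := hmv vstar hvstar_pos j
      have h5 := hμpos i; have h6 := hμpos j
      field_simp
    rw [hval]
    exact h3
  -- assemble
  have hsup_pos : (0:ℝ) < ⨆ i, ⨆ j,
      (fun m => μ m / K.mulVec v m) i * ustar j / ((fun m => μ m / K.mulVec v m) j * ustar i) := by
    have i0 := Classical.arbitrary (Fin R1)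
    have hpos : (0:ℝ) < (fun m => μ m / K.mulVec v m) i0 * ustar i0
        / ((fun m => μ m / K.mulVec v m) i0 * ustar i0) := by
      have h1 := hmv v hv i0
      have := hμpos i0; have := hustar_pos i0
      simp only []
      positivity
    calc (0:ℝ) < _ := hpos
      _ ≤ ⨆ j, (fun m => μ m / K.mulVec v m) i0 * ustar j / ((fun m => μ m / K.mulVec v m) j * ustar i0) :=
          le_ciSup (f := fun j => (fun m => μ m / K.mulVec v m) i0 * ustar j / ((fun m => μ m / K.mulVec v m) j * ustar i0)) (hbdd _) i0
      _ ≤ _ :=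
          le_ciSup (f := fun i => ⨆ j, (fun m => μ m / K.mulVec v m) i * ustar j / ((fun m => μ m / K.mulVec v m) j * ustar i)) (hbdd _) i0
  have hfin : dHP (fun m => μ m / K.mulVec v m) ustar
      = Real.log (⨆ i, ⨆ j, (fun m => μ m / K.mulVec v m) i * ustar j
        / ((fun m => μ m / K.mulVec v m) j * ustar i)) := rfl
  rw [hfin, Real.log_le_iff_le_exp hsup_pos]
  exact ciSup_le fun i => ciSup_le fun j => hterm i j
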